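/- arXiv:2410.07134 — 4 statements merged into one kernel-verified Lean document; each statement's English description precedes it below -/
import Mathlib

section
/- If (u, ũ) is a Golay complementary sequence pair of length N, then the interleaved sequences v (with v_{2n-1} = u_n, v_{2n} = ũ_n) and ṽ (with ṽ_{2n-1} = u_n, ṽ_{2n} = -ũ_n) of length 2N form a Golay complementary pair. -/
open scoped BigOperators

/-- Aperiodic autocorrelation of a length-`N` sequence `u : ℤ → ℂ`
(supported on `{0, …, N-1}`) at integer lag `ξ`. -/
noncomputable def acf (N : ℕ) (u : ℤ → ℂ) (ξ : ℤ) : ℂ :=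
  ∑ n ∈ Finset.range N, u n * (starRingEnd ℂ) (u (n + ξ))

lemma sum_range_two_mul' (N : ℕ) (f : ℕ → ℂ) :
    ∑ n ∈ Finset.range (2 * N), f n
      = ∑ m ∈ Finset.range N, (f (2 * m) + f (2 * m + 1)) := by
  induction N with
  | zero => simp
  | succ k ih =>
      rw [Nat.mul_succ, Finset.sum_range_succ, Finset.sum_range_succ,
        Finset.sum_range_succ, ih]
      ring

/-- Interleaving construction: if (u, ut) is a Golay pair of length N, then the
interleaved sequences (u₀, ut₀, u₁, ut₁, …) and (u₀, -ut₀, u₁, -ut₁, …) form a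
Golay pair of length 2N. -/
theorem golay_interleave (N : ℕ) (u ut : ℤ → ℂ)
    (hsu : ∀ n : ℤ, (n < 0 ∨ (N : ℤ) ≤ n) → u n = 0)
    (hsut : ∀ n : ℤ, (n < 0 ∨ (N : ℤ) ≤ n) → ut n = 0)
    (hmu : ∀ n : ℤ, 0 ≤ n → n < (N : ℤ) → ‖u n‖ = 1)
    (hmut : ∀ n : ℤ, 0 ≤ n → n < (N : ℤ) → ‖ut n‖ = 1)
    (hGolay : ∀ ξ : ℤ, acf N u ξ + acf N ut ξ = if ξ = 0 then (2 * N : ℂ) else 0) :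
    ∀ ξ : ℤ,
      acf (2 * N) (fun n => if n % 2 = 0 then u (n / 2) else ut (n / 2)) ξ +
        acf (2 * N) (fun n => if n % 2 = 0 then u (n / 2) else -ut (n / 2)) ξ =
      if ξ = 0 then (4 * N : ℂ) else 0 := by
  intro ξ
  unfold acf
  rw [← Finset.sum_add_distrib, sum_range_two_mul']
  rcases Int.even_or_odd ξ with ⟨η, hη⟩ | ⟨η, hη⟩
  · have hterm : ∀ m : ℕ, ∀ M : ℤ, M = (m : ℤ) →
        (((fun n : ℤ => if n % 2 = 0 then u (n / 2) else ut (n / 2)) (2 * M) *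
            (starRingEnd ℂ) ((fun n : ℤ => if n % 2 = 0 then u (n / 2) else ut (n / 2)) (2 * M + ξ)) +
          (fun n : ℤ => if n % 2 = 0 then u (n / 2) else -ut (n / 2)) (2 * M) *
            (starRingEnd ℂ) ((fun n : ℤ => if n % 2 = 0 then u (n / 2) else -ut (n / 2)) (2 * M + ξ))) +
         ((fun n : ℤ => if n % 2 = 0 then u (n / 2) else ut (n / 2)) (2 * M + 1) *
            (starRingEnd ℂ) ((fun n : ℤ => if n % 2 = 0 then u (n / 2) else ut (n / 2)) (2 * M + 1 + ξ)) +
          (fun n : ℤ => if n % 2 = 0 then u (n / 2) else -ut (n / 2)) (2 * M + 1) *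
            (starRingEnd ℂ) ((fun n : ℤ => if n % 2 = 0 then u (n / 2) else -ut (n / 2)) (2 * M + 1 + ξ))))
        = 2 * (u M * (starRingEnd ℂ) (u (M + η)) + ut M * (starRingEnd ℂ) (ut (M + η))) := by
      intro m M _
      have h1 : (2 * M) % 2 = 0 := by omega
      have h2 : (2 * M) / 2 = M := by omega
      have h3 : (2 * M + ξ) % 2 = 0 := by omega
      have h4 : (2 * M + ξ) / 2 = M + η := by omega
      have h5 : ¬ (2 * M + 1) % 2 = 0 := by omega
      have h6 : (2 * M + 1) / 2 = M := by omega
      have h7 : ¬ (2 * M + 1 + ξ) % 2 = 0 := by omega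
      have h8 : (2 * M + 1 + ξ) / 2 = M + η := by omega
      simp only [h1, h2, h3, h4, h6, h8, if_pos, if_neg h5, if_neg h7, map_neg]
      ring
    calc ∑ m ∈ Finset.range N, _ = ∑ m ∈ Finset.range N,
          2 * (u (m : ℤ) * (starRingEnd ℂ) (u ((m : ℤ) + η)) +
            ut (m : ℤ) * (starRingEnd ℂ) (ut ((m : ℤ) + η))) := by
          refine Finset.sum_congr rfl fun m _ => ?_
          have := hterm m (m : ℤ) rfl
          push_cast
          push_cast at this
          exact this
      _ = 2 * (acf N u η + acf N ut η) := by
          rw [acf, acf, ← Finset.sum_add_distrib, Finset.mul_sum]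
      _ = if ξ = 0 then (4 * N : ℂ) else 0 := by
          rw [hGolay η]
          have : ξ = 0 ↔ η = 0 := by omega
          by_cases h : η = 0 <;> simp [h, this] <;> ring
  · rw [if_neg (by omega : ¬ ξ = 0)]
    refine Finset.sum_eq_zero fun m _ => ?_
    have key : ∀ M : ℤ,
        (((fun n : ℤ => if n % 2 = 0 then u (n / 2) else ut (n / 2)) (2 * M) *
            (starRingEnd ℂ) ((fun n : ℤ => if n % 2 = 0 then u (n / 2) else ut (n / 2)) (2 * M + ξ)) +
          (fun n : ℤ => if n % 2 = 0 then u (n / 2) else -ut (n / 2)) (2 * M) *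
            (starRingEnd ℂ) ((fun n : ℤ => if n % 2 = 0 then u (n / 2) else -ut (n / 2)) (2 * M + ξ))) +
         ((fun n : ℤ => if n % 2 = 0 then u (n / 2) else ut (n / 2)) (2 * M + 1) *
            (starRingEnd ℂ) ((fun n : ℤ => if n % 2 = 0 then u (n / 2) else ut (n / 2)) (2 * M + 1 + ξ)) +
          (fun n : ℤ => if n % 2 = 0 then u (n / 2) else -ut (n / 2)) (2 * M + 1) *
            (starRingEnd ℂ) ((fun n : ℤ => if n % 2 = 0 then u (n / 2) else -ut (n / 2)) (2 * M + 1 + ξ))))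
        = 0 := by
      intro M
      have h1 : (2 * M) % 2 = 0 := by omega
      have h3 : ¬ (2 * M + ξ) % 2 = 0 := by omega
      have h5 : ¬ (2 * M + 1) % 2 = 0 := by omega
      have h7 : (2 * M + 1 + ξ) % 2 = 0 := by omega
      simp only [h1, h7, if_pos, if_neg h3, if_neg h5, map_neg]
      ring
    have := key (m : ℤ)
    push_cast
    push_cast at this
    exact this
end

section
/- Let (u₁, ũ₁) and (u₂, ũ₂) be Golay complementary sequence pairs of lengths L₁ and L₂. Then the arrays U = [u₁u₂ᵀ; -ũ₁ũ₂ᴴE] and Ũ = [u₁ũ₂ᵀ; ũ₁u₂ᴴE] of size 2L₁ × L₂ (vertical block stacking) form a Golay complementary array pair, where E is the L₂×L₂ anti-identity (reversal) matrix. -/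
open scoped BigOperators

/-- 2D aperiodic autocorrelation of an `N₁ × N₂` array `U : ℤ → ℤ → ℂ`
(supported on `{0,…,N₁-1} × {0,…,N₂-1}`). -/
noncomputable def acf2 (N₁ N₂ : ℕ) (U : ℤ → ℤ → ℂ) (ξ₁ ξ₂ : ℤ) : ℂ :=
  ∑ n₁ ∈ Finset.range N₁, ∑ n₂ ∈ Finset.range N₂,
    U n₁ n₂ * (starRingEnd ℂ) (U (n₁ + ξ₁) (n₂ + ξ₂))

lemma sum_range_coe (L : ℕ) (F : ℤ → ℂ) :
    ∑ n ∈ Finset.range L, F (n : ℤ) = ∑ n ∈ Finset.Icc (0:ℤ) ((L:ℤ) - 1), F n := by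
  refine Finset.sum_nbij' (fun n : ℕ => (n : ℤ)) Int.toNat ?_ ?_ ?_ ?_ ?_ <;>
    intro a ha <;>
    first
      | rfl
      | (simp only [Finset.mem_Icc, Finset.mem_range] at ha ⊢; omega)

lemma sum_Icc_ext (a b a' b' : ℤ) (F : ℤ → ℂ) (ha : a' ≤ a) (hb : b ≤ b')
    (h0 : ∀ n : ℤ, (n < a ∨ b < n) → F n = 0) :
    ∑ n ∈ Finset.Icc a b, F n = ∑ n ∈ Finset.Icc a' b', F n := by
  refine Finset.sum_subset (Finset.Icc_subset_Icc ha hb) ?_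
  intro x hx hx'
  simp only [Finset.mem_Icc] at hx hx'
  exact h0 x (by omega)

lemma sum_Icc_refl (a b c : ℤ) (F : ℤ → ℂ) :
    ∑ n ∈ Finset.Icc a b, F (c - n) = ∑ n ∈ Finset.Icc (c - b) (c - a), F n := by
  refine Finset.sum_nbij' (fun n => c - n) (fun n => c - n) ?_ ?_ ?_ ?_ ?_ <;>
    intro x hx <;>
    first
      | rfl
      | (simp only [Finset.mem_Icc] at hx ⊢; omega)

lemma sum_Icc_shift (a b c : ℤ) (F : ℤ → ℂ) :
    ∑ n ∈ Finset.Icc a b, F (n + c) = ∑ n ∈ Finset.Icc (a + c) (b + c), F n := by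
  refine Finset.sum_nbij' (fun n => n + c) (fun n => n - c) ?_ ?_ ?_ ?_ ?_ <;>
    intro x hx <;>
    first
      | rfl
      | (simp only [Finset.mem_Icc] at hx ⊢; omega)

lemma sum_range_trunc (L M : ℕ) (hLM : L ≤ M) (F : ℤ → ℂ)
    (hF : ∀ n : ℤ, (L:ℤ) ≤ n → F n = 0) :
    ∑ n ∈ Finset.range M, F (n:ℤ) = ∑ n ∈ Finset.range L, F (n:ℤ) := by
  refine (Finset.sum_subset (Finset.range_subset_range.2 hLM) ?_).symm
  intro x hx hx'
  simp only [Finset.mem_range] at hx hx'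
  exact hF x (by omega)

lemma sum_range_shift (L : ℕ) (F : ℤ → ℂ)
    (hF : ∀ n : ℤ, (n < 0 ∨ (L:ℤ) ≤ n) → F n = 0) :
    ∑ n ∈ Finset.range (2 * L), F ((n:ℤ) - L) = ∑ n ∈ Finset.range L, F (n:ℤ) := by
  rw [sum_range_coe (2*L) (fun n => F (n - L)), sum_range_coe L F]
  calc ∑ n ∈ Finset.Icc (0:ℤ) (((2*L:ℕ):ℤ) - 1), F (n - (L:ℤ))
      = ∑ n ∈ Finset.Icc (0:ℤ) (((2*L:ℕ):ℤ) - 1), F (n + -(L:ℤ)) :=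
        Finset.sum_congr rfl fun n _ => by rw [sub_eq_add_neg]
    _ = ∑ n ∈ Finset.Icc ((0:ℤ) + -(L:ℤ)) (((2*L:ℕ):ℤ) - 1 + -(L:ℤ)), F n :=
        sum_Icc_shift _ _ _ F
    _ = ∑ n ∈ Finset.Icc (0:ℤ) ((L:ℤ) - 1), F n :=
        (sum_Icc_ext 0 ((L:ℤ)-1) _ _ F (by omega) (by push_cast; omega)
          (fun n hn => hF n (by omega))).symm

lemma sum_range_swap (L : ℕ) (c : ℤ) (f g : ℤ → ℂ)
    (hf : ∀ n : ℤ, (n < 0 ∨ (L:ℤ) ≤ n) → f n = 0)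
    (hg : ∀ n : ℤ, (n < 0 ∨ (L:ℤ) ≤ n) → g n = 0) :
    ∑ n ∈ Finset.range L, f (n:ℤ) * g (c - n) = ∑ n ∈ Finset.range L, g (n:ℤ) * f (c - n) := by
  have hlo : min 0 (c - ((L:ℤ) - 1)) ≤ 0 := min_le_left _ _
  set lo := min 0 (c - ((L:ℤ) - 1)) with hlodef
  have hhi : (L:ℤ) - 1 ≤ c - lo := by omega
  have h1 : ∑ n ∈ Finset.range L, f (n:ℤ) * g (c - n)
      = ∑ n ∈ Finset.Icc lo (c - lo), f n * g (c - n) := by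
    rw [sum_range_coe L (fun n => f n * g (c - n))]
    exact sum_Icc_ext 0 ((L:ℤ)-1) lo (c - lo) _ hlo hhi
      (fun n hn => by rw [hf n (by omega), zero_mul])
  have h2 : ∑ n ∈ Finset.range L, g (n:ℤ) * f (c - n)
      = ∑ n ∈ Finset.Icc lo (c - lo), g n * f (c - n) := by
    rw [sum_range_coe L (fun n => g n * f (c - n))]
    exact sum_Icc_ext 0 ((L:ℤ)-1) lo (c - lo) _ hlo hhi
      (fun n hn => by rw [hg n (by omega), zero_mul])
  rw [h1, h2]
  calc ∑ n ∈ Finset.Icc lo (c - lo), f n * g (c - n)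
      = ∑ n ∈ Finset.Icc lo (c - lo), (fun m => g m * f (c - m)) (c - n) := by
        refine Finset.sum_congr rfl fun n _ => ?_
        simp only
        rw [sub_sub_cancel, mul_comm]
    _ = ∑ n ∈ Finset.Icc (c - (c - lo)) (c - lo), g n * f (c - n) := by
        exact sum_Icc_refl lo (c - lo) c (fun m => g m * f (c - m))
    _ = ∑ n ∈ Finset.Icc lo (c - lo), g n * f (c - n) := by rw [sub_sub_cancel]

/-- Vertical-stacking construction of a Golay complementary array pair from two Golay
complementary sequence pairs (Proposition 2, construction (24)). -/
theorem golay_array_from_seq_vert (L₁ L₂ : ℕ) (u₁ ut₁ u₂ ut₂ : ℤ → ℂ)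
    (hsu₁ : ∀ n : ℤ, (n < 0 ∨ (L₁ : ℤ) ≤ n) → u₁ n = 0)
    (hsut₁ : ∀ n : ℤ, (n < 0 ∨ (L₁ : ℤ) ≤ n) → ut₁ n = 0)
    (hsu₂ : ∀ n : ℤ, (n < 0 ∨ (L₂ : ℤ) ≤ n) → u₂ n = 0)
    (hsut₂ : ∀ n : ℤ, (n < 0 ∨ (L₂ : ℤ) ≤ n) → ut₂ n = 0)
    (hmu₁ : ∀ n : ℤ, 0 ≤ n → n < (L₁ : ℤ) → ‖u₁ n‖ = 1)
    (hmut₁ : ∀ n : ℤ, 0 ≤ n → n < (L₁ : ℤ) → ‖ut₁ n‖ = 1)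
    (hmu₂ : ∀ n : ℤ, 0 ≤ n → n < (L₂ : ℤ) → ‖u₂ n‖ = 1)
    (hmut₂ : ∀ n : ℤ, 0 ≤ n → n < (L₂ : ℤ) → ‖ut₂ n‖ = 1)
    (hG₁ : ∀ ξ : ℤ,
      (∑ n ∈ Finset.range L₁, u₁ n * (starRingEnd ℂ) (u₁ (n + ξ))) +
        (∑ n ∈ Finset.range L₁, ut₁ n * (starRingEnd ℂ) (ut₁ (n + ξ))) =
      if ξ = 0 then (2 * L₁ : ℂ) else 0)
    (hG₂ : ∀ ξ : ℤ,
      (∑ n ∈ Finset.range L₂, u₂ n * (starRingEnd ℂ) (u₂ (n + ξ))) +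
        (∑ n ∈ Finset.range L₂, ut₂ n * (starRingEnd ℂ) (ut₂ (n + ξ))) =
      if ξ = 0 then (2 * L₂ : ℂ) else 0) :
    ∀ ξ₁ ξ₂ : ℤ,
      acf2 (2 * L₁) L₂
          (fun n₁ n₂ => if n₁ < (L₁ : ℤ) then u₁ n₁ * u₂ n₂
            else -(ut₁ (n₁ - L₁) * (starRingEnd ℂ) (ut₂ ((L₂ : ℤ) - 1 - n₂)))) ξ₁ ξ₂ +
        acf2 (2 * L₁) L₂
          (fun n₁ n₂ => if n₁ < (L₁ : ℤ) then u₁ n₁ * ut₂ n₂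
            else ut₁ (n₁ - L₁) * (starRingEnd ℂ) (u₂ ((L₂ : ℤ) - 1 - n₂))) ξ₁ ξ₂ =
      if ξ₁ = 0 ∧ ξ₂ = 0 then (4 * L₁ * L₂ : ℂ) else 0 := by
  intro ξ₁ ξ₂
  have hUeq : ∀ m k : ℤ,
      (if m < (L₁:ℤ) then u₁ m * u₂ k
        else -(ut₁ (m - L₁) * (starRingEnd ℂ) (ut₂ ((L₂:ℤ) - 1 - k))))
      = u₁ m * u₂ k - ut₁ (m - L₁) * (starRingEnd ℂ) (ut₂ ((L₂:ℤ) - 1 - k)) := by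
    intro m k
    by_cases h : m < (L₁:ℤ)
    · rw [if_pos h, hsut₁ (m - L₁) (Or.inl (by omega)), zero_mul, sub_zero]
    · rw [if_neg h, hsu₁ m (Or.inr (by omega)), zero_mul, zero_sub]
  have hVeq : ∀ m k : ℤ,
      (if m < (L₁:ℤ) then u₁ m * ut₂ k
        else ut₁ (m - L₁) * (starRingEnd ℂ) (u₂ ((L₂:ℤ) - 1 - k)))
      = u₁ m * ut₂ k + ut₁ (m - L₁) * (starRingEnd ℂ) (u₂ ((L₂:ℤ) - 1 - k)) := by
    intro m k
    by_cases h : m < (L₁:ℤ)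
    · rw [if_pos h, hsut₁ (m - L₁) (Or.inl (by omega)), zero_mul, add_zero]
    · rw [if_neg h, hsu₁ m (Or.inr (by omega)), zero_mul, zero_add]
  -- expansion of the first array's autocorrelation
  have expandU : acf2 (2 * L₁) L₂
      (fun n₁ n₂ => if n₁ < (L₁ : ℤ) then u₁ n₁ * u₂ n₂
        else -(ut₁ (n₁ - L₁) * (starRingEnd ℂ) (ut₂ ((L₂ : ℤ) - 1 - n₂)))) ξ₁ ξ₂ =
      (∑ n ∈ Finset.range (2*L₁), u₁ (n:ℤ) * (starRingEnd ℂ) (u₁ ((n:ℤ) + ξ₁))) *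
        (∑ n ∈ Finset.range L₂, u₂ (n:ℤ) * (starRingEnd ℂ) (u₂ ((n:ℤ) + ξ₂)))
      - (∑ n ∈ Finset.range (2*L₁), u₁ (n:ℤ) * (starRingEnd ℂ) (ut₁ ((n:ℤ) + ξ₁ - L₁))) *
        (∑ n ∈ Finset.range L₂, u₂ (n:ℤ) * ut₂ ((L₂:ℤ) - 1 - ((n:ℤ) + ξ₂)))
      - (∑ n ∈ Finset.range (2*L₁), ut₁ ((n:ℤ) - L₁) * (starRingEnd ℂ) (u₁ ((n:ℤ) + ξ₁))) *
        (∑ n ∈ Finset.range L₂, (starRingEnd ℂ) (ut₂ ((L₂:ℤ) - 1 - (n:ℤ))) * (starRingEnd ℂ) (u₂ ((n:ℤ) + ξ₂)))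
      + (∑ n ∈ Finset.range (2*L₁), ut₁ ((n:ℤ) - L₁) * (starRingEnd ℂ) (ut₁ ((n:ℤ) + ξ₁ - L₁))) *
        (∑ n ∈ Finset.range L₂, (starRingEnd ℂ) (ut₂ ((L₂:ℤ) - 1 - (n:ℤ))) * ut₂ ((L₂:ℤ) - 1 - ((n:ℤ) + ξ₂))) := by
    simp only [acf2]
    rw [Finset.sum_mul_sum, Finset.sum_mul_sum, Finset.sum_mul_sum, Finset.sum_mul_sum,
      ← Finset.sum_sub_distrib, ← Finset.sum_sub_distrib, ← Finset.sum_add_distrib]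
    refine Finset.sum_congr rfl fun n₁ _ => ?_
    rw [← Finset.sum_sub_distrib, ← Finset.sum_sub_distrib, ← Finset.sum_add_distrib]
    refine Finset.sum_congr rfl fun n₂ _ => ?_
    rw [hUeq, hUeq]
    simp only [map_sub, map_mul, Complex.conj_conj]
    ring
  have expandV : acf2 (2 * L₁) L₂
      (fun n₁ n₂ => if n₁ < (L₁ : ℤ) then u₁ n₁ * ut₂ n₂
        else ut₁ (n₁ - L₁) * (starRingEnd ℂ) (u₂ ((L₂ : ℤ) - 1 - n₂))) ξ₁ ξ₂ =
      (∑ n ∈ Finset.range (2*L₁), u₁ (n:ℤ) * (starRingEnd ℂ) (u₁ ((n:ℤ) + ξ₁))) *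
        (∑ n ∈ Finset.range L₂, ut₂ (n:ℤ) * (starRingEnd ℂ) (ut₂ ((n:ℤ) + ξ₂)))
      + (∑ n ∈ Finset.range (2*L₁), u₁ (n:ℤ) * (starRingEnd ℂ) (ut₁ ((n:ℤ) + ξ₁ - L₁))) *
        (∑ n ∈ Finset.range L₂, ut₂ (n:ℤ) * u₂ ((L₂:ℤ) - 1 - ((n:ℤ) + ξ₂)))
      + (∑ n ∈ Finset.range (2*L₁), ut₁ ((n:ℤ) - L₁) * (starRingEnd ℂ) (u₁ ((n:ℤ) + ξ₁))) *
        (∑ n ∈ Finset.range L₂, (starRingEnd ℂ) (u₂ ((L₂:ℤ) - 1 - (n:ℤ))) * (starRingEnd ℂ) (ut₂ ((n:ℤ) + ξ₂)))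
      + (∑ n ∈ Finset.range (2*L₁), ut₁ ((n:ℤ) - L₁) * (starRingEnd ℂ) (ut₁ ((n:ℤ) + ξ₁ - L₁))) *
        (∑ n ∈ Finset.range L₂, (starRingEnd ℂ) (u₂ ((L₂:ℤ) - 1 - (n:ℤ))) * u₂ ((L₂:ℤ) - 1 - ((n:ℤ) + ξ₂))) := by
    simp only [acf2]
    rw [Finset.sum_mul_sum, Finset.sum_mul_sum, Finset.sum_mul_sum, Finset.sum_mul_sum,
      ← Finset.sum_add_distrib, ← Finset.sum_add_distrib, ← Finset.sum_add_distrib]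
    refine Finset.sum_congr rfl fun n₁ _ => ?_
    rw [← Finset.sum_add_distrib, ← Finset.sum_add_distrib, ← Finset.sum_add_distrib]
    refine Finset.sum_congr rfl fun n₂ _ => ?_
    rw [hVeq, hVeq]
    simp only [map_add, map_mul, Complex.conj_conj]
    ring
  -- evaluations of the n₁-sums
  have hP1 : ∑ n ∈ Finset.range (2*L₁), u₁ (n:ℤ) * (starRingEnd ℂ) (u₁ ((n:ℤ) + ξ₁))
      = ∑ n ∈ Finset.range L₁, u₁ (n:ℤ) * (starRingEnd ℂ) (u₁ ((n:ℤ) + ξ₁)) :=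
    sum_range_trunc L₁ (2*L₁) (by omega) (fun n => u₁ n * (starRingEnd ℂ) (u₁ (n + ξ₁)))
      (fun n hn => by rw [hsu₁ n (Or.inr hn), zero_mul])
  have hP4 : ∑ n ∈ Finset.range (2*L₁), ut₁ ((n:ℤ) - L₁) * (starRingEnd ℂ) (ut₁ ((n:ℤ) + ξ₁ - L₁))
      = ∑ n ∈ Finset.range L₁, ut₁ (n:ℤ) * (starRingEnd ℂ) (ut₁ ((n:ℤ) + ξ₁)) := by
    have h := sum_range_shift L₁ (fun n => ut₁ n * (starRingEnd ℂ) (ut₁ (n + ξ₁)))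
      (fun n hn => by rw [hsut₁ n hn, zero_mul])
    rw [← h]
    exact Finset.sum_congr rfl fun n _ => by
      rw [show (n:ℤ) + ξ₁ - (L₁:ℤ) = (n:ℤ) - (L₁:ℤ) + ξ₁ from by ring]
  -- support facts for reflected sequences
  have hfu : ∀ n : ℤ, (n < 0 ∨ (L₂:ℤ) ≤ n) → (starRingEnd ℂ) (u₂ ((L₂:ℤ) - 1 - n)) = 0 :=
    fun n hn => by rw [hsu₂ _ (by omega), map_zero]
  have hft : ∀ n : ℤ, (n < 0 ∨ (L₂:ℤ) ≤ n) → (starRingEnd ℂ) (ut₂ ((L₂:ℤ) - 1 - n)) = 0 :=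
    fun n hn => by rw [hsut₂ _ (by omega), map_zero]
  have earg : ∀ n : ℕ, (L₂:ℤ) - 1 - ((n:ℤ) + ξ₂) = ((L₂:ℤ) - 1 - ξ₂) - (n:ℤ) := fun n => by ring
  have earg2 : ∀ n : ℕ, (L₂:ℤ) - 1 - (((L₂:ℤ) - 1 - ξ₂) - (n:ℤ)) = (n:ℤ) + ξ₂ := fun n => by ring
  -- the n₂-sum identities
  have hZ : ∑ n ∈ Finset.range L₂, u₂ (n:ℤ) * ut₂ ((L₂:ℤ) - 1 - ((n:ℤ) + ξ₂))
      = ∑ n ∈ Finset.range L₂, ut₂ (n:ℤ) * u₂ ((L₂:ℤ) - 1 - ((n:ℤ) + ξ₂)) := by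
    have h := sum_range_swap L₂ ((L₂:ℤ) - 1 - ξ₂) u₂ ut₂ hsu₂ hsut₂
    calc ∑ n ∈ Finset.range L₂, u₂ (n:ℤ) * ut₂ ((L₂:ℤ) - 1 - ((n:ℤ) + ξ₂))
        = ∑ n ∈ Finset.range L₂, u₂ (n:ℤ) * ut₂ (((L₂:ℤ) - 1 - ξ₂) - (n:ℤ)) :=
          Finset.sum_congr rfl fun n _ => by rw [earg n]
      _ = ∑ n ∈ Finset.range L₂, ut₂ (n:ℤ) * u₂ (((L₂:ℤ) - 1 - ξ₂) - (n:ℤ)) := h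
      _ = ∑ n ∈ Finset.range L₂, ut₂ (n:ℤ) * u₂ ((L₂:ℤ) - 1 - ((n:ℤ) + ξ₂)) :=
          Finset.sum_congr rfl fun n _ => by rw [earg n]
  have hW : ∑ n ∈ Finset.range L₂, (starRingEnd ℂ) (ut₂ ((L₂:ℤ) - 1 - (n:ℤ))) * (starRingEnd ℂ) (u₂ ((n:ℤ) + ξ₂))
      = ∑ n ∈ Finset.range L₂, (starRingEnd ℂ) (u₂ ((L₂:ℤ) - 1 - (n:ℤ))) * (starRingEnd ℂ) (ut₂ ((n:ℤ) + ξ₂)) := by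
    have h : ∑ n ∈ Finset.range L₂, (starRingEnd ℂ) (ut₂ ((L₂:ℤ) - 1 - (n:ℤ)))
          * (starRingEnd ℂ) (u₂ ((L₂:ℤ) - 1 - (((L₂:ℤ) - 1 - ξ₂) - (n:ℤ))))
        = ∑ n ∈ Finset.range L₂, (starRingEnd ℂ) (u₂ ((L₂:ℤ) - 1 - (n:ℤ)))
          * (starRingEnd ℂ) (ut₂ ((L₂:ℤ) - 1 - (((L₂:ℤ) - 1 - ξ₂) - (n:ℤ)))) := by
      exact sum_range_swap L₂ ((L₂:ℤ) - 1 - ξ₂)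
        (fun n => (starRingEnd ℂ) (ut₂ ((L₂:ℤ) - 1 - n)))
        (fun n => (starRingEnd ℂ) (u₂ ((L₂:ℤ) - 1 - n))) hft hfu
    calc ∑ n ∈ Finset.range L₂, (starRingEnd ℂ) (ut₂ ((L₂:ℤ) - 1 - (n:ℤ))) * (starRingEnd ℂ) (u₂ ((n:ℤ) + ξ₂))
        = ∑ n ∈ Finset.range L₂, (starRingEnd ℂ) (ut₂ ((L₂:ℤ) - 1 - (n:ℤ)))
            * (starRingEnd ℂ) (u₂ ((L₂:ℤ) - 1 - (((L₂:ℤ) - 1 - ξ₂) - (n:ℤ)))) :=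
          Finset.sum_congr rfl fun n _ => by rw [earg2 n]
      _ = ∑ n ∈ Finset.range L₂, (starRingEnd ℂ) (u₂ ((L₂:ℤ) - 1 - (n:ℤ)))
            * (starRingEnd ℂ) (ut₂ ((L₂:ℤ) - 1 - (((L₂:ℤ) - 1 - ξ₂) - (n:ℤ)))) := h
      _ = ∑ n ∈ Finset.range L₂, (starRingEnd ℂ) (u₂ ((L₂:ℤ) - 1 - (n:ℤ))) * (starRingEnd ℂ) (ut₂ ((n:ℤ) + ξ₂)) :=
          Finset.sum_congr rfl fun n _ => by rw [earg2 n]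
  have hQ4u : ∑ n ∈ Finset.range L₂, (starRingEnd ℂ) (ut₂ ((L₂:ℤ) - 1 - (n:ℤ))) * ut₂ ((L₂:ℤ) - 1 - ((n:ℤ) + ξ₂))
      = ∑ n ∈ Finset.range L₂, ut₂ (n:ℤ) * (starRingEnd ℂ) (ut₂ ((n:ℤ) + ξ₂)) := by
    have h : ∑ n ∈ Finset.range L₂, (starRingEnd ℂ) (ut₂ ((L₂:ℤ) - 1 - (n:ℤ))) * ut₂ (((L₂:ℤ) - 1 - ξ₂) - (n:ℤ))
        = ∑ n ∈ Finset.range L₂, ut₂ (n:ℤ) * (starRingEnd ℂ) (ut₂ ((L₂:ℤ) - 1 - (((L₂:ℤ) - 1 - ξ₂) - (n:ℤ)))) := by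
      exact sum_range_swap L₂ ((L₂:ℤ) - 1 - ξ₂)
        (fun n => (starRingEnd ℂ) (ut₂ ((L₂:ℤ) - 1 - n))) ut₂ hft hsut₂
    calc ∑ n ∈ Finset.range L₂, (starRingEnd ℂ) (ut₂ ((L₂:ℤ) - 1 - (n:ℤ))) * ut₂ ((L₂:ℤ) - 1 - ((n:ℤ) + ξ₂))
        = ∑ n ∈ Finset.range L₂, (starRingEnd ℂ) (ut₂ ((L₂:ℤ) - 1 - (n:ℤ))) * ut₂ (((L₂:ℤ) - 1 - ξ₂) - (n:ℤ)) :=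
          Finset.sum_congr rfl fun n _ => by rw [earg n]
      _ = ∑ n ∈ Finset.range L₂, ut₂ (n:ℤ) * (starRingEnd ℂ) (ut₂ ((L₂:ℤ) - 1 - (((L₂:ℤ) - 1 - ξ₂) - (n:ℤ)))) := h
      _ = ∑ n ∈ Finset.range L₂, ut₂ (n:ℤ) * (starRingEnd ℂ) (ut₂ ((n:ℤ) + ξ₂)) :=
          Finset.sum_congr rfl fun n _ => by rw [earg2 n]
  have hQ4v : ∑ n ∈ Finset.range L₂, (starRingEnd ℂ) (u₂ ((L₂:ℤ) - 1 - (n:ℤ))) * u₂ ((L₂:ℤ) - 1 - ((n:ℤ) + ξ₂))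
      = ∑ n ∈ Finset.range L₂, u₂ (n:ℤ) * (starRingEnd ℂ) (u₂ ((n:ℤ) + ξ₂)) := by
    have h : ∑ n ∈ Finset.range L₂, (starRingEnd ℂ) (u₂ ((L₂:ℤ) - 1 - (n:ℤ))) * u₂ (((L₂:ℤ) - 1 - ξ₂) - (n:ℤ))
        = ∑ n ∈ Finset.range L₂, u₂ (n:ℤ) * (starRingEnd ℂ) (u₂ ((L₂:ℤ) - 1 - (((L₂:ℤ) - 1 - ξ₂) - (n:ℤ)))) := by
      exact sum_range_swap L₂ ((L₂:ℤ) - 1 - ξ₂)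
        (fun n => (starRingEnd ℂ) (u₂ ((L₂:ℤ) - 1 - n))) u₂ hfu hsu₂
    calc ∑ n ∈ Finset.range L₂, (starRingEnd ℂ) (u₂ ((L₂:ℤ) - 1 - (n:ℤ))) * u₂ ((L₂:ℤ) - 1 - ((n:ℤ) + ξ₂))
        = ∑ n ∈ Finset.range L₂, (starRingEnd ℂ) (u₂ ((L₂:ℤ) - 1 - (n:ℤ))) * u₂ (((L₂:ℤ) - 1 - ξ₂) - (n:ℤ)) :=
          Finset.sum_congr rfl fun n _ => by rw [earg n]
      _ = ∑ n ∈ Finset.range L₂, u₂ (n:ℤ) * (starRingEnd ℂ) (u₂ ((L₂:ℤ) - 1 - (((L₂:ℤ) - 1 - ξ₂) - (n:ℤ)))) := h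
      _ = ∑ n ∈ Finset.range L₂, u₂ (n:ℤ) * (starRingEnd ℂ) (u₂ ((n:ℤ) + ξ₂)) :=
          Finset.sum_congr rfl fun n _ => by rw [earg2 n]
  have hfin : (if ξ₁ = 0 then (2 * L₁ : ℂ) else 0) * (if ξ₂ = 0 then (2 * L₂ : ℂ) else 0)
      = if ξ₁ = 0 ∧ ξ₂ = 0 then (4 * L₁ * L₂ : ℂ) else 0 := by
    by_cases h1 : ξ₁ = 0 <;> by_cases h2 : ξ₂ = 0 <;> simp [h1, h2] <;> push_cast <;> ring
  rw [expandU, expandV, hP1, hP4, hZ, hW, hQ4u, hQ4v, ← hfin, ← hG₁ ξ₁, ← hG₂ ξ₂]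
  ring
end

section
/- Let (u₁, ũ₁) and (u₂, ũ₂) be Golay complementary sequence pairs of lengths L₁ and L₂. Then the arrays U = [u₁u₂ᵀ, -ũ₁ũ₂ᴴE] and Ũ = [u₁ũ₂ᵀ, ũ₁u₂ᴴE] of size L₁ × 2L₂ (horizontal block concatenation) form a Golay complementary array pair with constant 4L₁L₂. -/
open scoped BigOperators




lemma sum_range_eq_tsum (N : ℕ) (f : ℤ → ℂ)
    (hf : ∀ n : ℤ, (n < 0 ∨ (N : ℤ) ≤ n) → f n = 0) :
    ∑ n ∈ Finset.range N, f n = ∑' n : ℤ, f n := by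
  rw [tsum_eq_sum (s := (Finset.range N).map ⟨(Nat.cast : ℕ → ℤ), Nat.cast_injective⟩)
    (fun b hb => ?_)]
  · rw [Finset.sum_map]; rfl
  · simp only [Finset.mem_map, Finset.mem_range, Function.Embedding.coeFn_mk] at hb
    rcases lt_or_ge b 0 with h | h
    · exact hf _ (Or.inl h)
    · refine hf _ (Or.inr ?_)
      by_contra hlt
      push_neg at hlt
      exact hb ⟨b.toNat, by omega, by omega⟩

lemma tsum_reflect (c : ℤ) (f : ℤ → ℂ) : ∑' n : ℤ, f (c - n) = ∑' n : ℤ, f n :=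
  (Equiv.subLeft c).tsum_eq f

lemma reflect_sum₁ (L : ℕ) (p q : ℤ → ℂ)
    (hp : ∀ n : ℤ, (n < 0 ∨ (L : ℤ) ≤ n) → p n = 0)
    (hq : ∀ n : ℤ, (n < 0 ∨ (L : ℤ) ≤ n) → q n = 0) (ξ : ℤ) :
    ∑ n ∈ Finset.range (2 * L), p n * q (2 * (L : ℤ) - 1 - (n + ξ))
      = ∑ n ∈ Finset.range (2 * L), q n * p (2 * (L : ℤ) - 1 - (n + ξ)) := by
  rw [sum_range_eq_tsum (2 * L) (fun n => p n * q (2 * (L : ℤ) - 1 - (n + ξ)))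
        (fun n hn => by rw [hp n (by push_cast at hn ⊢; omega)]; ring),
      sum_range_eq_tsum (2 * L) (fun n => q n * p (2 * (L : ℤ) - 1 - (n + ξ)))
        (fun n hn => by rw [hq n (by push_cast at hn ⊢; omega)]; ring)]
  rw [← tsum_reflect (2 * (L : ℤ) - 1 - ξ) (fun n => q n * p (2 * (L : ℤ) - 1 - (n + ξ)))]
  apply tsum_congr
  intro n
  rw [show (2 * (L : ℤ) - 1 - ((2 * (L : ℤ) - 1 - ξ - n) + ξ)) = n by ring,
      show (2 * (L : ℤ) - 1 - ξ - n) = 2 * (L : ℤ) - 1 - (n + ξ) by ring]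
  ring

lemma reflect_sum₂ (L : ℕ) (p q : ℤ → ℂ)
    (hp : ∀ n : ℤ, (n < 0 ∨ (L : ℤ) ≤ n) → p n = 0)
    (hq : ∀ n : ℤ, (n < 0 ∨ (L : ℤ) ≤ n) → q n = 0) (ξ : ℤ) :
    ∑ n ∈ Finset.range (2 * L), p (2 * (L : ℤ) - 1 - n) * q (n + ξ)
      = ∑ n ∈ Finset.range (2 * L), q (2 * (L : ℤ) - 1 - n) * p (n + ξ) := by
  rw [sum_range_eq_tsum (2 * L) (fun n => p (2 * (L : ℤ) - 1 - n) * q (n + ξ))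
        (fun n hn => by rw [hp (2 * (L : ℤ) - 1 - n) (by push_cast at hn ⊢; omega)]; ring),
      sum_range_eq_tsum (2 * L) (fun n => q (2 * (L : ℤ) - 1 - n) * p (n + ξ))
        (fun n hn => by rw [hq (2 * (L : ℤ) - 1 - n) (by push_cast at hn ⊢; omega)]; ring)]
  rw [← tsum_reflect (2 * (L : ℤ) - 1 - ξ) (fun n => q (2 * (L : ℤ) - 1 - n) * p (n + ξ))]
  apply tsum_congr
  intro n
  rw [show (2 * (L : ℤ) - 1 - (2 * (L : ℤ) - 1 - ξ - n)) = n + ξ by ring,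
      show (2 * (L : ℤ) - 1 - ξ - n + ξ) = 2 * (L : ℤ) - 1 - n by ring]
  ring

lemma reflect_sum₃ (L : ℕ) (p q : ℤ → ℂ)
    (hp : ∀ n : ℤ, (n < 0 ∨ (L : ℤ) ≤ n) → p n = 0)
    (hq : ∀ n : ℤ, (n < 0 ∨ (L : ℤ) ≤ n) → q n = 0) (ξ : ℤ) :
    ∑ n ∈ Finset.range (2 * L), p (2 * (L : ℤ) - 1 - n) * q (2 * (L : ℤ) - 1 - (n + ξ))
      = ∑ n ∈ Finset.range L, q n * p (n + ξ) := by
  rw [sum_range_eq_tsum (2 * L) (fun n => p (2 * (L : ℤ) - 1 - n) * q (2 * (L : ℤ) - 1 - (n + ξ)))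
        (fun n hn => by rw [hp (2 * (L : ℤ) - 1 - n) (by push_cast at hn ⊢; omega)]; ring),
      sum_range_eq_tsum L (fun n => q n * p (n + ξ))
        (fun n hn => by rw [hq n (by push_cast at hn ⊢; omega)]; ring)]
  rw [← tsum_reflect (2 * (L : ℤ) - 1 - ξ) (fun n => q n * p (n + ξ))]
  apply tsum_congr
  intro n
  rw [show (2 * (L : ℤ) - 1 - ξ - n + ξ) = 2 * (L : ℤ) - 1 - n by ring,
      show (2 * (L : ℤ) - 1 - ξ - n) = 2 * (L : ℤ) - 1 - (n + ξ) by ring]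
  ring

lemma sum_range_two_mul (L : ℕ) (p q : ℤ → ℂ)
    (hp : ∀ n : ℤ, (n < 0 ∨ (L : ℤ) ≤ n) → p n = 0) (ξ : ℤ) :
    ∑ n ∈ Finset.range (2 * L), p n * q (n + ξ) = ∑ n ∈ Finset.range L, p n * q (n + ξ) :=
  (Finset.sum_subset (Finset.range_subset_range.mpr (by omega)) (fun x hx hx' => by
    rw [hp x (by simp only [Finset.mem_range] at hx'; push_cast; omega)]; ring)).symm


lemma acf2_expand (N₁ N₂ : ℕ) (x y p q : ℤ → ℂ) (ξ₁ ξ₂ : ℤ) :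
    acf2 N₁ N₂ (fun n₁ n₂ => x n₁ * p n₂ + y n₁ * q n₂) ξ₁ ξ₂ =
      (∑ n ∈ Finset.range N₁, x n * (starRingEnd ℂ) (x (n + ξ₁))) *
        (∑ n ∈ Finset.range N₂, p n * (starRingEnd ℂ) (p (n + ξ₂)))
    + (∑ n ∈ Finset.range N₁, x n * (starRingEnd ℂ) (y (n + ξ₁))) *
        (∑ n ∈ Finset.range N₂, p n * (starRingEnd ℂ) (q (n + ξ₂)))
    + (∑ n ∈ Finset.range N₁, y n * (starRingEnd ℂ) (x (n + ξ₁))) *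
        (∑ n ∈ Finset.range N₂, q n * (starRingEnd ℂ) (p (n + ξ₂)))
    + (∑ n ∈ Finset.range N₁, y n * (starRingEnd ℂ) (y (n + ξ₁))) *
        (∑ n ∈ Finset.range N₂, q n * (starRingEnd ℂ) (q (n + ξ₂))) := by
  unfold acf2
  simp only [Finset.sum_mul_sum, ← Finset.sum_add_distrib]
  refine Finset.sum_congr rfl fun n₁ _ => Finset.sum_congr rfl fun n₂ _ => ?_
  simp only [map_add, map_mul]
  ring

/-- Horizontal-concatenation construction of a Golay complementary array pair from two
Golay complementary sequence pairs (Proposition 2, construction (25)). -/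
theorem golay_array_from_seq_horiz (L₁ L₂ : ℕ) (u₁ ut₁ u₂ ut₂ : ℤ → ℂ)
    (hsu₁ : ∀ n : ℤ, (n < 0 ∨ (L₁ : ℤ) ≤ n) → u₁ n = 0)
    (hsut₁ : ∀ n : ℤ, (n < 0 ∨ (L₁ : ℤ) ≤ n) → ut₁ n = 0)
    (hsu₂ : ∀ n : ℤ, (n < 0 ∨ (L₂ : ℤ) ≤ n) → u₂ n = 0)
    (hsut₂ : ∀ n : ℤ, (n < 0 ∨ (L₂ : ℤ) ≤ n) → ut₂ n = 0)
    (hmu₁ : ∀ n : ℤ, 0 ≤ n → n < (L₁ : ℤ) → ‖u₁ n‖ = 1)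
    (hmut₁ : ∀ n : ℤ, 0 ≤ n → n < (L₁ : ℤ) → ‖ut₁ n‖ = 1)
    (hmu₂ : ∀ n : ℤ, 0 ≤ n → n < (L₂ : ℤ) → ‖u₂ n‖ = 1)
    (hmut₂ : ∀ n : ℤ, 0 ≤ n → n < (L₂ : ℤ) → ‖ut₂ n‖ = 1)
    (hG₁ : ∀ ξ : ℤ,
      (∑ n ∈ Finset.range L₁, u₁ n * (starRingEnd ℂ) (u₁ (n + ξ))) +
        (∑ n ∈ Finset.range L₁, ut₁ n * (starRingEnd ℂ) (ut₁ (n + ξ))) =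
      if ξ = 0 then (2 * L₁ : ℂ) else 0)
    (hG₂ : ∀ ξ : ℤ,
      (∑ n ∈ Finset.range L₂, u₂ n * (starRingEnd ℂ) (u₂ (n + ξ))) +
        (∑ n ∈ Finset.range L₂, ut₂ n * (starRingEnd ℂ) (ut₂ (n + ξ))) =
      if ξ = 0 then (2 * L₂ : ℂ) else 0) :
    ∀ ξ₁ ξ₂ : ℤ,
      acf2 L₁ (2 * L₂)
          (fun n₁ n₂ => if n₂ < (L₂ : ℤ) then u₁ n₁ * u₂ n₂
            else -(ut₁ n₁ * (starRingEnd ℂ) (ut₂ (2 * (L₂ : ℤ) - 1 - n₂)))) ξ₁ ξ₂ +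
        acf2 L₁ (2 * L₂)
          (fun n₁ n₂ => if n₂ < (L₂ : ℤ) then u₁ n₁ * ut₂ n₂
            else ut₁ n₁ * (starRingEnd ℂ) (u₂ (2 * (L₂ : ℤ) - 1 - n₂))) ξ₁ ξ₂ =
      if ξ₁ = 0 ∧ ξ₂ = 0 then (4 * L₁ * L₂ : ℂ) else 0 := by
  intro ξ₁ ξ₂
  have hUfun : (fun n₁ n₂ : ℤ => if n₂ < (L₂ : ℤ) then u₁ n₁ * u₂ n₂
      else -(ut₁ n₁ * (starRingEnd ℂ) (ut₂ (2 * (L₂ : ℤ) - 1 - n₂))))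
      = fun n₁ n₂ : ℤ => u₁ n₁ * u₂ n₂
        + ut₁ n₁ * (-(starRingEnd ℂ) (ut₂ (2 * (L₂ : ℤ) - 1 - n₂))) := by
    funext n₁ n₂
    by_cases h : n₂ < (L₂ : ℤ)
    · rw [if_pos h, hsut₂ (2 * (L₂ : ℤ) - 1 - n₂) (Or.inr (by omega))]
      simp
    · rw [if_neg h, hsu₂ n₂ (Or.inr (by omega))]
      ring
  have hUtfun : (fun n₁ n₂ : ℤ => if n₂ < (L₂ : ℤ) then u₁ n₁ * ut₂ n₂
      else ut₁ n₁ * (starRingEnd ℂ) (u₂ (2 * (L₂ : ℤ) - 1 - n₂)))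
      = fun n₁ n₂ : ℤ => u₁ n₁ * ut₂ n₂
        + ut₁ n₁ * ((starRingEnd ℂ) (u₂ (2 * (L₂ : ℤ) - 1 - n₂))) := by
    funext n₁ n₂
    by_cases h : n₂ < (L₂ : ℤ)
    · rw [if_pos h, hsu₂ (2 * (L₂ : ℤ) - 1 - n₂) (Or.inr (by omega))]
      simp
    · rw [if_neg h, hsut₂ n₂ (Or.inr (by omega))]
      ring
  rw [hUfun, hUtfun, acf2_expand, acf2_expand]
  -- abbreviations (as explicit sums)
  have e1 : (∑ n ∈ Finset.range (2 * L₂), u₂ (n : ℤ) * (starRingEnd ℂ) (u₂ ((n : ℤ) + ξ₂)))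
      = ∑ n ∈ Finset.range L₂, u₂ (n : ℤ) * (starRingEnd ℂ) (u₂ ((n : ℤ) + ξ₂)) :=
    sum_range_two_mul L₂ u₂ (fun m => (starRingEnd ℂ) (u₂ m)) hsu₂ ξ₂
  have e2 : (∑ n ∈ Finset.range (2 * L₂), ut₂ (n : ℤ) * (starRingEnd ℂ) (ut₂ ((n : ℤ) + ξ₂)))
      = ∑ n ∈ Finset.range L₂, ut₂ (n : ℤ) * (starRingEnd ℂ) (ut₂ ((n : ℤ) + ξ₂)) :=
    sum_range_two_mul L₂ ut₂ (fun m => (starRingEnd ℂ) (ut₂ m)) hsut₂ ξ₂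
  have h3 : (∑ n ∈ Finset.range (2 * L₂),
        (starRingEnd ℂ) (ut₂ (2 * (L₂ : ℤ) - 1 - (n : ℤ))) * ut₂ (2 * (L₂ : ℤ) - 1 - ((n : ℤ) + ξ₂)))
      = ∑ n ∈ Finset.range L₂, ut₂ (n : ℤ) * (starRingEnd ℂ) (ut₂ ((n : ℤ) + ξ₂)) :=
    reflect_sum₃ L₂ (fun m => (starRingEnd ℂ) (ut₂ m)) ut₂
      (fun n hn => by simp [hsut₂ n hn]) hsut₂ ξ₂
  have e3 : (∑ n ∈ Finset.range (2 * L₂),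
        -(starRingEnd ℂ) (ut₂ (2 * (L₂ : ℤ) - 1 - (n : ℤ))) *
          (starRingEnd ℂ) (-(starRingEnd ℂ) (ut₂ (2 * (L₂ : ℤ) - 1 - ((n : ℤ) + ξ₂)))))
      = ∑ n ∈ Finset.range L₂, ut₂ (n : ℤ) * (starRingEnd ℂ) (ut₂ ((n : ℤ) + ξ₂)) := by
    rw [← h3]
    exact Finset.sum_congr rfl fun n _ => by simp [map_neg, Complex.conj_conj]
  have h4 : (∑ n ∈ Finset.range (2 * L₂),
        (starRingEnd ℂ) (u₂ (2 * (L₂ : ℤ) - 1 - (n : ℤ))) * u₂ (2 * (L₂ : ℤ) - 1 - ((n : ℤ) + ξ₂)))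
      = ∑ n ∈ Finset.range L₂, u₂ (n : ℤ) * (starRingEnd ℂ) (u₂ ((n : ℤ) + ξ₂)) :=
    reflect_sum₃ L₂ (fun m => (starRingEnd ℂ) (u₂ m)) u₂
      (fun n hn => by simp [hsu₂ n hn]) hsu₂ ξ₂
  have e4 : (∑ n ∈ Finset.range (2 * L₂),
        (starRingEnd ℂ) (u₂ (2 * (L₂ : ℤ) - 1 - (n : ℤ))) *
          (starRingEnd ℂ) ((starRingEnd ℂ) (u₂ (2 * (L₂ : ℤ) - 1 - ((n : ℤ) + ξ₂)))))
      = ∑ n ∈ Finset.range L₂, u₂ (n : ℤ) * (starRingEnd ℂ) (u₂ ((n : ℤ) + ξ₂)) := by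
    rw [← h4]
    exact Finset.sum_congr rfl fun n _ => by simp [Complex.conj_conj]
  have e5 : (∑ n ∈ Finset.range (2 * L₂),
        u₂ (n : ℤ) * (starRingEnd ℂ) (-(starRingEnd ℂ) (ut₂ (2 * (L₂ : ℤ) - 1 - ((n : ℤ) + ξ₂)))))
      + (∑ n ∈ Finset.range (2 * L₂),
        ut₂ (n : ℤ) * (starRingEnd ℂ) ((starRingEnd ℂ) (u₂ (2 * (L₂ : ℤ) - 1 - ((n : ℤ) + ξ₂))))) = 0 := by
    have h := reflect_sum₁ L₂ ut₂ u₂ hsut₂ hsu₂ ξ₂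
    have hA : (∑ n ∈ Finset.range (2 * L₂),
          u₂ (n : ℤ) * (starRingEnd ℂ) (-(starRingEnd ℂ) (ut₂ (2 * (L₂ : ℤ) - 1 - ((n : ℤ) + ξ₂)))))
        = ∑ n ∈ Finset.range (2 * L₂),
            -(u₂ (n : ℤ) * ut₂ (2 * (L₂ : ℤ) - 1 - ((n : ℤ) + ξ₂))) :=
      Finset.sum_congr rfl fun n _ => by simp [Complex.conj_conj]
    have hB : (∑ n ∈ Finset.range (2 * L₂),
          ut₂ (n : ℤ) * (starRingEnd ℂ) ((starRingEnd ℂ) (u₂ (2 * (L₂ : ℤ) - 1 - ((n : ℤ) + ξ₂)))))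
        = ∑ n ∈ Finset.range (2 * L₂), ut₂ (n : ℤ) * u₂ (2 * (L₂ : ℤ) - 1 - ((n : ℤ) + ξ₂)) :=
      Finset.sum_congr rfl fun n _ => by simp [Complex.conj_conj]
    rw [hA, hB, Finset.sum_neg_distrib, h]
    ring
  have e6 : (∑ n ∈ Finset.range (2 * L₂),
        -(starRingEnd ℂ) (ut₂ (2 * (L₂ : ℤ) - 1 - (n : ℤ))) * (starRingEnd ℂ) (u₂ ((n : ℤ) + ξ₂)))
      + (∑ n ∈ Finset.range (2 * L₂),
        (starRingEnd ℂ) (u₂ (2 * (L₂ : ℤ) - 1 - (n : ℤ))) * (starRingEnd ℂ) (ut₂ ((n : ℤ) + ξ₂))) = 0 := by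
    have h : (∑ n ∈ Finset.range (2 * L₂),
          (starRingEnd ℂ) (u₂ (2 * (L₂ : ℤ) - 1 - (n : ℤ))) * (starRingEnd ℂ) (ut₂ ((n : ℤ) + ξ₂)))
        = ∑ n ∈ Finset.range (2 * L₂),
            (starRingEnd ℂ) (ut₂ (2 * (L₂ : ℤ) - 1 - (n : ℤ))) * (starRingEnd ℂ) (u₂ ((n : ℤ) + ξ₂)) :=
      reflect_sum₂ L₂ (fun m => (starRingEnd ℂ) (u₂ m)) (fun m => (starRingEnd ℂ) (ut₂ m))
        (fun n hn => by simp [hsu₂ n hn]) (fun n hn => by simp [hsut₂ n hn]) ξ₂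
    have hA : (∑ n ∈ Finset.range (2 * L₂),
          -(starRingEnd ℂ) (ut₂ (2 * (L₂ : ℤ) - 1 - (n : ℤ))) * (starRingEnd ℂ) (u₂ ((n : ℤ) + ξ₂)))
        = ∑ n ∈ Finset.range (2 * L₂),
            -((starRingEnd ℂ) (ut₂ (2 * (L₂ : ℤ) - 1 - (n : ℤ))) * (starRingEnd ℂ) (u₂ ((n : ℤ) + ξ₂))) :=
      Finset.sum_congr rfl fun n _ => by ring
    rw [hA, Finset.sum_neg_distrib, h]
    ring
  have hfinal : (if ξ₁ = 0 then (2 * L₁ : ℂ) else 0) * (if ξ₂ = 0 then (2 * L₂ : ℂ) else 0)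
      = if ξ₁ = 0 ∧ ξ₂ = 0 then (4 * L₁ * L₂ : ℂ) else 0 := by
    by_cases h1 : ξ₁ = 0 <;> by_cases h2 : ξ₂ = 0 <;> simp [h1, h2] <;> push_cast <;> ring
  rw [e1, e2, e3, e4]
  linear_combination
    ((∑ n ∈ Finset.range L₁, u₁ (n : ℤ) * (starRingEnd ℂ) (u₁ ((n : ℤ) + ξ₁))) +
      (∑ n ∈ Finset.range L₁, ut₁ (n : ℤ) * (starRingEnd ℂ) (ut₁ ((n : ℤ) + ξ₁)))) * hG₂ ξ₂
    + (if ξ₂ = 0 then (2 * L₂ : ℂ) else 0) * hG₁ ξ₁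
    + (∑ n ∈ Finset.range L₁, u₁ (n : ℤ) * (starRingEnd ℂ) (ut₁ ((n : ℤ) + ξ₁))) * e5
    + (∑ n ∈ Finset.range L₁, ut₁ (n : ℤ) * (starRingEnd ℂ) (u₁ ((n : ℤ) + ξ₁))) * e6
    + hfinal
end

section
/- A dual-polarized UPA RIS with configuration matrices (Υ_H, Υ_V) ∈ ℂ^{N_y×Ñ_z} produces a constant power-domain array factor A(φ,θ) = N_yN_z for all azimuth φ and elevation θ if and only if (Υ_H, Υ_V) form a Golay complementary array pair. -/
open scoped BigOperators

open Finset Complex Real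

lemma sum_range_int (N : ℕ) (f : ℤ → ℂ) :
    ∑ n ∈ Finset.range N, f n = ∑ n ∈ Finset.Icc (0:ℤ) ((N:ℤ)-1), f n := by
  refine Finset.sum_nbij' (fun n => (n:ℤ)) (fun z => z.toNat) ?_ ?_ ?_ ?_ ?_ <;>
    intros <;> simp_all [Finset.mem_Icc, Finset.mem_range] <;> omega

lemma sum_range_int2 (N₁ N₂ : ℕ) (f : ℤ → ℤ → ℂ) :
    ∑ n₁ ∈ Finset.range N₁, ∑ n₂ ∈ Finset.range N₂, f n₁ n₂
      = ∑ n₁ ∈ Finset.Icc (0:ℤ) ((N₁:ℤ)-1), ∑ n₂ ∈ Finset.Icc (0:ℤ) ((N₂:ℤ)-1), f n₁ n₂ :=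
  calc ∑ n₁ ∈ Finset.range N₁, ∑ n₂ ∈ Finset.range N₂, f n₁ n₂
      = ∑ n₁ ∈ Finset.range N₁, ∑ n₂ ∈ Finset.Icc (0:ℤ) ((N₂:ℤ)-1), f n₁ n₂ :=
        Finset.sum_congr rfl (fun _ _ => sum_range_int _ _)
    _ = _ := sum_range_int N₁ (fun n₁ => ∑ n₂ ∈ Finset.Icc (0:ℤ) ((N₂:ℤ)-1), f n₁ n₂)

lemma acf2_eq (N₁ N₂ : ℕ) (U : ℤ → ℤ → ℂ) (ξ₁ ξ₂ : ℤ) :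
    acf2 N₁ N₂ U ξ₁ ξ₂ = ∑ n₁ ∈ Finset.Icc (0:ℤ) ((N₁:ℤ)-1), ∑ n₂ ∈ Finset.Icc (0:ℤ) ((N₂:ℤ)-1),
      U n₁ n₂ * (starRingEnd ℂ) (U (n₁ + ξ₁) (n₂ + ξ₂)) :=
  sum_range_int2 N₁ N₂ (fun n₁ n₂ => U n₁ n₂ * (starRingEnd ℂ) (U (n₁ + ξ₁) (n₂ + ξ₂)))

lemma sum_shift (N : ℕ) (G : ℤ → ℂ) (hG : ∀ m : ℤ, (m < 0 ∨ (N:ℤ) ≤ m) → G m = 0)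
    (n : ℤ) (hn : 0 ≤ n) (hn' : n ≤ (N:ℤ)-1) :
    ∑ m ∈ Finset.Icc (0:ℤ) ((N:ℤ)-1), G m
      = ∑ ξ ∈ Finset.Icc (1-(N:ℤ)) ((N:ℤ)-1), G (n+ξ) := by
  have h1 : ∑ ξ ∈ Finset.Icc (1-(N:ℤ)) ((N:ℤ)-1), G (n+ξ)
      = ∑ m ∈ Finset.Icc (n+(1-(N:ℤ))) (n+((N:ℤ)-1)), G m := by
    rw [← Finset.map_add_left_Icc, Finset.sum_map]
    rfl
  rw [h1]
  apply Finset.sum_subset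
  · intro x hx
    simp only [Finset.mem_Icc] at *
    omega
  · intro x _ hx
    simp only [Finset.mem_Icc] at hx
    exact hG x (by omega)

lemma sum_swap4 {α β : Type*} (A₁ A₂ : Finset α) (B₁ B₂ : Finset β) (f : α → α → β → β → ℂ) :
    ∑ a ∈ A₁, ∑ b ∈ A₂, ∑ c ∈ B₁, ∑ d ∈ B₂, f a b c d
      = ∑ c ∈ B₁, ∑ d ∈ B₂, ∑ a ∈ A₁, ∑ b ∈ A₂, f a b c d :=
  calc ∑ a ∈ A₁, ∑ b ∈ A₂, ∑ c ∈ B₁, ∑ d ∈ B₂, f a b c d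
      = ∑ a ∈ A₁, ∑ c ∈ B₁, ∑ b ∈ A₂, ∑ d ∈ B₂, f a b c d :=
        Finset.sum_congr rfl fun a _ => Finset.sum_comm
    _ = ∑ c ∈ B₁, ∑ a ∈ A₁, ∑ b ∈ A₂, ∑ d ∈ B₂, f a b c d := Finset.sum_comm
    _ = ∑ c ∈ B₁, ∑ a ∈ A₁, ∑ d ∈ B₂, ∑ b ∈ A₂, f a b c d :=
        Finset.sum_congr rfl fun c _ => Finset.sum_congr rfl fun a _ => Finset.sum_comm
    _ = ∑ c ∈ B₁, ∑ d ∈ B₂, ∑ a ∈ A₁, ∑ b ∈ A₂, f a b c d :=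
        Finset.sum_congr rfl fun c _ => Finset.sum_comm

lemma expand (Ny Nzt : ℕ) (U : ℤ → ℤ → ℂ)
    (hs : ∀ n₁ n₂ : ℤ,
      (n₁ < 0 ∨ (Ny : ℤ) ≤ n₁ ∨ n₂ < 0 ∨ (Nzt : ℤ) ≤ n₂) → U n₁ n₂ = 0)
    (ψy ψz : ℝ) :
    (∑ n₁ ∈ Finset.Icc (0:ℤ) ((Ny:ℤ)-1), ∑ n₂ ∈ Finset.Icc (0:ℤ) ((Nzt:ℤ)-1),
        U n₁ n₂ * Complex.exp (-((n₁:ℂ)*(ψy:ℂ) + 2*(n₂:ℂ)*(ψz:ℂ)) * Complex.I)) *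
      (starRingEnd ℂ) (∑ n₁ ∈ Finset.Icc (0:ℤ) ((Ny:ℤ)-1), ∑ n₂ ∈ Finset.Icc (0:ℤ) ((Nzt:ℤ)-1),
        U n₁ n₂ * Complex.exp (-((n₁:ℂ)*(ψy:ℂ) + 2*(n₂:ℂ)*(ψz:ℂ)) * Complex.I))
    = ∑ ξ₁ ∈ Finset.Icc (1-(Ny:ℤ)) ((Ny:ℤ)-1), ∑ ξ₂ ∈ Finset.Icc (1-(Nzt:ℤ)) ((Nzt:ℤ)-1),
        acf2 Ny Nzt U ξ₁ ξ₂ * Complex.exp (((ξ₁:ℂ)*(ψy:ℂ) + 2*(ξ₂:ℂ)*(ψz:ℂ)) * Complex.I) := by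
  have hconj : (starRingEnd ℂ) (∑ n₁ ∈ Finset.Icc (0:ℤ) ((Ny:ℤ)-1), ∑ n₂ ∈ Finset.Icc (0:ℤ) ((Nzt:ℤ)-1),
        U n₁ n₂ * Complex.exp (-((n₁:ℂ)*(ψy:ℂ) + 2*(n₂:ℂ)*(ψz:ℂ)) * Complex.I))
      = ∑ m₁ ∈ Finset.Icc (0:ℤ) ((Ny:ℤ)-1), ∑ m₂ ∈ Finset.Icc (0:ℤ) ((Nzt:ℤ)-1),
        (starRingEnd ℂ) (U m₁ m₂) * Complex.exp (((m₁:ℂ)*(ψy:ℂ) + 2*(m₂:ℂ)*(ψz:ℂ)) * Complex.I) := by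
    rw [map_sum]
    refine Finset.sum_congr rfl fun m₁ _ => ?_
    rw [map_sum]
    refine Finset.sum_congr rfl fun m₂ _ => ?_
    rw [map_mul, ← Complex.exp_conj]
    congr 1
    simp only [map_mul, map_add, map_neg, Complex.conj_ofReal, Complex.conj_I, map_intCast,
      map_ofNat]
    ring
  rw [hconj]
  simp only [Finset.sum_mul, Finset.mul_sum]
  rw [sum_swap4]
  trans (∑ n₁ ∈ Finset.Icc (0:ℤ) ((Ny:ℤ)-1), ∑ n₂ ∈ Finset.Icc (0:ℤ) ((Nzt:ℤ)-1),
      ∑ ξ₁ ∈ Finset.Icc (1-(Ny:ℤ)) ((Ny:ℤ)-1), ∑ ξ₂ ∈ Finset.Icc (1-(Nzt:ℤ)) ((Nzt:ℤ)-1),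
      (U n₁ n₂ * (starRingEnd ℂ) (U (n₁+ξ₁) (n₂+ξ₂))) *
        Complex.exp (((ξ₁:ℂ)*(ψy:ℂ) + 2*(ξ₂:ℂ)*(ψz:ℂ)) * Complex.I))
  · refine Finset.sum_congr rfl fun n₁ hn₁ => Finset.sum_congr rfl fun n₂ hn₂ => ?_
    simp only [Finset.mem_Icc] at hn₁ hn₂
    rw [sum_shift Ny (fun m₁ => ∑ m₂ ∈ Finset.Icc (0:ℤ) ((Nzt:ℤ)-1),
        U n₁ n₂ * Complex.exp (-((n₁:ℂ)*(ψy:ℂ) + 2*(n₂:ℂ)*(ψz:ℂ)) * Complex.I) *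
          ((starRingEnd ℂ) (U m₁ m₂) * Complex.exp (((m₁:ℂ)*(ψy:ℂ) + 2*(m₂:ℂ)*(ψz:ℂ)) * Complex.I)))
      (fun m₁ hm₁ => by
        beta_reduce
        rw [Finset.sum_eq_zero]
        intro m₂ _
        rw [hs m₁ m₂ (by tauto), map_zero, zero_mul, mul_zero])
      n₁ hn₁.1 hn₁.2]
    refine Finset.sum_congr rfl fun ξ₁ _ => ?_
    beta_reduce
    rw [sum_shift Nzt (fun m₂ =>
        U n₁ n₂ * Complex.exp (-((n₁:ℂ)*(ψy:ℂ) + 2*(n₂:ℂ)*(ψz:ℂ)) * Complex.I) *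
          ((starRingEnd ℂ) (U (n₁+ξ₁) m₂) *
            Complex.exp ((((n₁+ξ₁ : ℤ):ℂ)*(ψy:ℂ) + 2*(m₂:ℂ)*(ψz:ℂ)) * Complex.I)))
      (fun m₂ hm₂ => by
        beta_reduce
        rw [hs (n₁+ξ₁) m₂ (by tauto), map_zero, zero_mul, mul_zero])
      n₂ hn₂.1 hn₂.2]
    refine Finset.sum_congr rfl fun ξ₂ _ => ?_
    beta_reduce
    rw [mul_mul_mul_comm, ← Complex.exp_add]
    congr 2
    push_cast
    ring
  · rw [sum_swap4]
    refine Finset.sum_congr rfl fun ξ₁ _ => Finset.sum_congr rfl fun ξ₂ _ => ?_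
    rw [acf2_eq, Finset.sum_mul]
    refine Finset.sum_congr rfl fun n₁ _ => ?_
    rw [Finset.sum_mul]

lemma orth (M : ℕ) (d : ℤ) (h : |d| < (M:ℤ)) :
    ∑ k ∈ Finset.range M, Complex.exp ((d:ℂ) * (2*(Real.pi:ℂ)/M) * Complex.I * k)
      = if d = 0 then (M:ℂ) else 0 := by
  have hM : (0:ℤ) < M := lt_of_le_of_lt (abs_nonneg d) h
  have hM0 : (M:ℂ) ≠ 0 := by exact_mod_cast (by omega : (M:ℤ) ≠ 0)
  set r : ℂ := Complex.exp ((d:ℂ) * (2*(Real.pi:ℂ)/M) * Complex.I) with hr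
  have hpow : ∀ k : ℕ, Complex.exp ((d:ℂ) * (2*(Real.pi:ℂ)/M) * Complex.I * k) = r ^ k := by
    intro k
    rw [hr, ← Complex.exp_nat_mul]
    ring_nf
  simp only [hpow]
  by_cases hd : d = 0
  · subst hd
    simp [hr]
  · rw [if_neg hd]
    have hrM : r ^ M = 1 := by
      rw [hr, ← Complex.exp_nat_mul]
      have : (M:ℂ) * ((d:ℂ) * (2*(Real.pi:ℂ)/M) * Complex.I) = (d:ℂ) * (2 * (Real.pi:ℂ) * Complex.I) := by
        field_simp
      rw [this, Complex.exp_int_mul_two_pi_mul_I]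
    have hπ : (Real.pi:ℂ) ≠ 0 := by exact_mod_cast Real.pi_ne_zero
    have hr1 : r ≠ 1 := by
      intro hc
      obtain ⟨n, hn⟩ := Complex.exp_eq_one_iff.mp (hr ▸ hc)
      have hn2 : (d:ℂ) * (2 * (Real.pi:ℂ) * Complex.I) = ((n:ℂ) * M) * (2 * (Real.pi:ℂ) * Complex.I) := by
        have := congrArg (· * (M:ℂ)) hn
        field_simp at this
        linear_combination (2 * (Real.pi:ℂ) * Complex.I) * this
      have hdn : (d:ℂ) = (n:ℂ) * M :=
        mul_right_cancel₀ (mul_ne_zero (mul_ne_zero two_ne_zero hπ) Complex.I_ne_zero) hn2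
      have hdint : d = n * M := by exact_mod_cast hdn
      have hn0 : n = 0 := by
        by_contra h0
        have h1 : (1:ℤ) ≤ |n| := Int.one_le_abs h0
        have : (M:ℤ) ≤ |d| := by
          rw [hdint, abs_mul, abs_of_nonneg (le_of_lt hM)]
          nlinarith
        omega
      rw [hn0] at hdint
      simp at hdint
      exact hd hdint
    rw [geom_sum_eq hr1, hrM]
    simp

lemma fourier_extract (Ny Nzt : ℕ) (C : ℤ → ℤ → ℂ)
    (hflat : ∀ ψy ψz : ℝ,
      ∑ ξ₁ ∈ Finset.Icc (1-(Ny:ℤ)) ((Ny:ℤ)-1), ∑ ξ₂ ∈ Finset.Icc (1-(Nzt:ℤ)) ((Nzt:ℤ)-1),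
        C ξ₁ ξ₂ * Complex.exp (((ξ₁:ℂ)*(ψy:ℂ) + 2*(ξ₂:ℂ)*(ψz:ℂ)) * Complex.I)
        = (Ny:ℂ) * (2*Nzt))
    (a b : ℤ) (ha : a ∈ Finset.Icc (1-(Ny:ℤ)) ((Ny:ℤ)-1))
    (hb : b ∈ Finset.Icc (1-(Nzt:ℤ)) ((Nzt:ℤ)-1)) :
    C a b = if a = 0 ∧ b = 0 then (2*Ny*Nzt : ℂ) else 0 := by
  simp only [Finset.mem_Icc] at ha hb
  have hNy : 1 ≤ Ny := by omega
  have hNzt : 1 ≤ Nzt := by omega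
  set M₁ : ℕ := 2*Ny with hM₁
  set M₂ : ℕ := 2*Nzt with hM₂
  set D1 : ℤ → ℕ → ℂ := fun d k => Complex.exp ((d:ℂ) * (2*(Real.pi:ℂ)/M₁) * Complex.I * k) with hD1
  set D2 : ℤ → ℕ → ℂ := fun d l => Complex.exp ((d:ℂ) * (2*(Real.pi:ℂ)/M₂) * Complex.I * l) with hD2
  set K : ℂ := (Ny:ℂ) * (2*Nzt) with hK
  have hM₁0 : (M₁:ℂ) ≠ 0 := Nat.cast_ne_zero.mpr (by omega)
  have hM₂0 : (M₂:ℂ) ≠ 0 := Nat.cast_ne_zero.mpr (by omega)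
  have hkey : ∀ (ξ₁ ξ₂ : ℤ) (k l : ℕ),
      (C ξ₁ ξ₂ * Complex.exp (((ξ₁:ℂ)*((2*Real.pi*k/M₁ : ℝ):ℂ) + 2*(ξ₂:ℂ)*((Real.pi*l/M₂ : ℝ):ℂ)) * Complex.I))
        * (D1 (-a) k * D2 (-b) l)
      = C ξ₁ ξ₂ * (D1 (ξ₁-a) k * D2 (ξ₂-b) l) := by
    intro ξ₁ ξ₂ k l
    rw [hD1, hD2]
    simp only
    rw [mul_assoc]
    congr 1
    rw [← Complex.exp_add, ← Complex.exp_add, ← Complex.exp_add]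
    congr 1
    push_cast
    ring
  have way1 : ∑ k ∈ Finset.range M₁, ∑ l ∈ Finset.range M₂,
      (∑ ξ₁ ∈ Finset.Icc (1-(Ny:ℤ)) ((Ny:ℤ)-1), ∑ ξ₂ ∈ Finset.Icc (1-(Nzt:ℤ)) ((Nzt:ℤ)-1),
        C ξ₁ ξ₂ * Complex.exp (((ξ₁:ℂ)*((2*Real.pi*k/M₁ : ℝ):ℂ) + 2*(ξ₂:ℂ)*((Real.pi*l/M₂ : ℝ):ℂ)) * Complex.I))
        * (D1 (-a) k * D2 (-b) l)
      = K * ((if -a = 0 then (M₁:ℂ) else 0) * (if -b = 0 then (M₂:ℂ) else 0)) := by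
    calc ∑ k ∈ Finset.range M₁, ∑ l ∈ Finset.range M₂,
        (∑ ξ₁ ∈ Finset.Icc (1-(Ny:ℤ)) ((Ny:ℤ)-1), ∑ ξ₂ ∈ Finset.Icc (1-(Nzt:ℤ)) ((Nzt:ℤ)-1),
          C ξ₁ ξ₂ * Complex.exp (((ξ₁:ℂ)*((2*Real.pi*k/M₁ : ℝ):ℂ) + 2*(ξ₂:ℂ)*((Real.pi*l/M₂ : ℝ):ℂ)) * Complex.I))
          * (D1 (-a) k * D2 (-b) l)
        = ∑ k ∈ Finset.range M₁, ∑ l ∈ Finset.range M₂, K * (D1 (-a) k * D2 (-b) l) :=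
          Finset.sum_congr rfl fun k _ => Finset.sum_congr rfl fun l _ => by
            rw [hflat (2*Real.pi*k/M₁ : ℝ) (Real.pi*l/M₂ : ℝ)]
      _ = K * ((∑ k ∈ Finset.range M₁, D1 (-a) k) * (∑ l ∈ Finset.range M₂, D2 (-b) l)) := by
          rw [Finset.sum_mul_sum]
          simp only [Finset.mul_sum]
      _ = K * ((if -a = 0 then (M₁:ℂ) else 0) * (if -b = 0 then (M₂:ℂ) else 0)) := by
          rw [hD1, hD2]
          simp only
          rw [orth M₁ (-a) (by simp only [hM₁]; rw [abs_lt]; push_cast; omega),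
            orth M₂ (-b) (by simp only [hM₂]; rw [abs_lt]; push_cast; omega)]
  have way2 : ∑ k ∈ Finset.range M₁, ∑ l ∈ Finset.range M₂,
      (∑ ξ₁ ∈ Finset.Icc (1-(Ny:ℤ)) ((Ny:ℤ)-1), ∑ ξ₂ ∈ Finset.Icc (1-(Nzt:ℤ)) ((Nzt:ℤ)-1),
        C ξ₁ ξ₂ * Complex.exp (((ξ₁:ℂ)*((2*Real.pi*k/M₁ : ℝ):ℂ) + 2*(ξ₂:ℂ)*((Real.pi*l/M₂ : ℝ):ℂ)) * Complex.I))
        * (D1 (-a) k * D2 (-b) l)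
      = C a b * ((M₁:ℂ) * (M₂:ℂ)) := by
    calc ∑ k ∈ Finset.range M₁, ∑ l ∈ Finset.range M₂,
        (∑ ξ₁ ∈ Finset.Icc (1-(Ny:ℤ)) ((Ny:ℤ)-1), ∑ ξ₂ ∈ Finset.Icc (1-(Nzt:ℤ)) ((Nzt:ℤ)-1),
          C ξ₁ ξ₂ * Complex.exp (((ξ₁:ℂ)*((2*Real.pi*k/M₁ : ℝ):ℂ) + 2*(ξ₂:ℂ)*((Real.pi*l/M₂ : ℝ):ℂ)) * Complex.I))
          * (D1 (-a) k * D2 (-b) l)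
        = ∑ k ∈ Finset.range M₁, ∑ l ∈ Finset.range M₂,
          ∑ ξ₁ ∈ Finset.Icc (1-(Ny:ℤ)) ((Ny:ℤ)-1), ∑ ξ₂ ∈ Finset.Icc (1-(Nzt:ℤ)) ((Nzt:ℤ)-1),
          C ξ₁ ξ₂ * (D1 (ξ₁-a) k * D2 (ξ₂-b) l) := by
          refine Finset.sum_congr rfl fun k _ => Finset.sum_congr rfl fun l _ => ?_
          rw [Finset.sum_mul]
          refine Finset.sum_congr rfl fun ξ₁ _ => ?_
          rw [Finset.sum_mul]
          exact Finset.sum_congr rfl fun ξ₂ _ => hkey ξ₁ ξ₂ k l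
      _ = ∑ ξ₁ ∈ Finset.Icc (1-(Ny:ℤ)) ((Ny:ℤ)-1), ∑ ξ₂ ∈ Finset.Icc (1-(Nzt:ℤ)) ((Nzt:ℤ)-1),
          ∑ k ∈ Finset.range M₁, ∑ l ∈ Finset.range M₂,
          C ξ₁ ξ₂ * (D1 (ξ₁-a) k * D2 (ξ₂-b) l) := sum_swap4 _ _ _ _ _
      _ = ∑ ξ₁ ∈ Finset.Icc (1-(Ny:ℤ)) ((Ny:ℤ)-1), ∑ ξ₂ ∈ Finset.Icc (1-(Nzt:ℤ)) ((Nzt:ℤ)-1),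
          C ξ₁ ξ₂ * ((if ξ₁ - a = 0 then (M₁:ℂ) else 0) * (if ξ₂ - b = 0 then (M₂:ℂ) else 0)) := by
          refine Finset.sum_congr rfl fun ξ₁ hξ₁ => Finset.sum_congr rfl fun ξ₂ hξ₂ => ?_
          simp only [Finset.mem_Icc] at hξ₁ hξ₂
          rw [show (∑ k ∈ Finset.range M₁, ∑ l ∈ Finset.range M₂,
              C ξ₁ ξ₂ * (D1 (ξ₁-a) k * D2 (ξ₂-b) l))
            = C ξ₁ ξ₂ * ((∑ k ∈ Finset.range M₁, D1 (ξ₁-a) k) * (∑ l ∈ Finset.range M₂, D2 (ξ₂-b) l)) from by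
              rw [Finset.sum_mul_sum]; simp only [Finset.mul_sum]]
          rw [hD1, hD2]
          simp only
          rw [orth M₁ (ξ₁-a) (by simp only [hM₁]; rw [abs_lt]; push_cast; omega),
            orth M₂ (ξ₂-b) (by simp only [hM₂]; rw [abs_lt]; push_cast; omega)]
      _ = C a b * ((M₁:ℂ) * (M₂:ℂ)) := by
          have hterm : ∀ ξ₁ ξ₂ : ℤ,
              C ξ₁ ξ₂ * ((if ξ₁ - a = 0 then (M₁:ℂ) else 0) * (if ξ₂ - b = 0 then (M₂:ℂ) else 0))
              = if ξ₁ = a then (if ξ₂ = b then C a b * ((M₁:ℂ) * (M₂:ℂ)) else 0) else 0 := by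
            intro ξ₁ ξ₂
            by_cases h1 : ξ₁ = a <;> by_cases h2 : ξ₂ = b <;>
              simp [h1, h2, sub_eq_zero, sub_ne_zero] <;> ring
          simp only [hterm]
          have h1 : ∀ x : ℤ, (∑ x1 ∈ Finset.Icc (1-(Nzt:ℤ)) ((Nzt:ℤ)-1),
              if x = a then (if x1 = b then C a b * ((M₁:ℂ)*(M₂:ℂ)) else 0) else 0)
              = if x = a then C a b * ((M₁:ℂ)*(M₂:ℂ)) else 0 := by
            intro x
            by_cases hx : x = a
            · simp only [hx, if_true]
              rw [Finset.sum_ite_eq' _ b, if_pos (Finset.mem_Icc.mpr hb)]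
            · simp [hx]
          simp only [h1]
          rw [Finset.sum_ite_eq' _ a, if_pos (Finset.mem_Icc.mpr ha)]
  have heq : C a b * ((M₁:ℂ) * (M₂:ℂ))
      = K * ((if -a = 0 then (M₁:ℂ) else 0) * (if -b = 0 then (M₂:ℂ) else 0)) := by
    rw [← way2, way1]
  by_cases ha0 : a = 0 <;> by_cases hb0 : b = 0
  · subst ha0; subst hb0
    simp only [neg_zero, if_pos rfl, and_self, if_pos] at heq ⊢
    have := mul_right_cancel₀ (mul_ne_zero hM₁0 hM₂0) heq
    rw [this, hK]
    ring
  · rw [if_neg (by tauto)]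
    have : K * ((if -a = 0 then (M₁:ℂ) else 0) * (if -b = 0 then (M₂:ℂ) else 0)) = 0 := by
      simp [hb0]
    rw [this] at heq
    exact (mul_eq_zero.mp heq).resolve_right (mul_ne_zero hM₁0 hM₂0)
  · rw [if_neg (by tauto)]
    have : K * ((if -a = 0 then (M₁:ℂ) else 0) * (if -b = 0 then (M₂:ℂ) else 0)) = 0 := by
      simp [ha0]
    rw [this] at heq
    exact (mul_eq_zero.mp heq).resolve_right (mul_ne_zero hM₁0 hM₂0)
  · rw [if_neg (by tauto)]
    have : K * ((if -a = 0 then (M₁:ℂ) else 0) * (if -b = 0 then (M₂:ℂ) else 0)) = 0 := by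
      simp [ha0]
    rw [this] at heq
    exact (mul_eq_zero.mp heq).resolve_right (mul_ne_zero hM₁0 hM₂0)

lemma acf_out (Ny Nzt : ℕ) (U : ℤ → ℤ → ℂ)
    (hs : ∀ n₁ n₂ : ℤ,
      (n₁ < 0 ∨ (Ny : ℤ) ≤ n₁ ∨ n₂ < 0 ∨ (Nzt : ℤ) ≤ n₂) → U n₁ n₂ = 0)
    (ξ₁ ξ₂ : ℤ)
    (h : ξ₁ ∉ Finset.Icc (1-(Ny:ℤ)) ((Ny:ℤ)-1) ∨ ξ₂ ∉ Finset.Icc (1-(Nzt:ℤ)) ((Nzt:ℤ)-1)) :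
    acf2 Ny Nzt U ξ₁ ξ₂ = 0 := by
  unfold acf2
  apply Finset.sum_eq_zero
  intro n₁ hn₁
  apply Finset.sum_eq_zero
  intro n₂ hn₂
  simp only [Finset.mem_range] at hn₁ hn₂
  simp only [Finset.mem_Icc, not_and_or, not_le] at h
  rw [hs (↑n₁+ξ₁) (↑n₂+ξ₂) (by omega), map_zero, mul_zero]

/-- Proposition 1: a dual-polarized UPA RIS with configuration matrices (Υ_H, Υ_V)
(of size N_y × Ñ_z each, with N_z = 2Ñ_z) produces a spatially flat power-domain
array factor A(φ,θ) = N_y N_z for all observation angles if and only if (Υ_H, Υ_V)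
form a Golay complementary array pair. -/
theorem broad_beam_iff_golay (Ny Nzt : ℕ) (UH UV : ℤ → ℤ → ℂ)
    (hsUH : ∀ n₁ n₂ : ℤ,
      (n₁ < 0 ∨ (Ny : ℤ) ≤ n₁ ∨ n₂ < 0 ∨ (Nzt : ℤ) ≤ n₂) → UH n₁ n₂ = 0)
    (hsUV : ∀ n₁ n₂ : ℤ,
      (n₁ < 0 ∨ (Ny : ℤ) ≤ n₁ ∨ n₂ < 0 ∨ (Nzt : ℤ) ≤ n₂) → UV n₁ n₂ = 0)
    (hmUH : ∀ n₁ n₂ : ℤ, 0 ≤ n₁ → n₁ < (Ny : ℤ) → 0 ≤ n₂ → n₂ < (Nzt : ℤ) →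
      ‖UH n₁ n₂‖ = 1)
    (hmUV : ∀ n₁ n₂ : ℤ, 0 ≤ n₁ → n₁ < (Ny : ℤ) → 0 ≤ n₂ → n₂ < (Nzt : ℤ) →
      ‖UV n₁ n₂‖ = 1) :
    (∀ ψy ψz : ℝ,
      ‖∑ n₁ ∈ Finset.range Ny, ∑ n₂ ∈ Finset.range Nzt,
          UH n₁ n₂ *
            Complex.exp (-((n₁ : ℂ) * (ψy : ℂ) + (2 * (n₂ : ℂ) + 1) * (ψz : ℂ)) *
              Complex.I)‖ ^ 2 +
        ‖∑ n₁ ∈ Finset.range Ny, ∑ n₂ ∈ Finset.range Nzt,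
          UV n₁ n₂ *
            Complex.exp (-((n₁ : ℂ) * (ψy : ℂ) + 2 * (n₂ : ℂ) * (ψz : ℂ)) *
              Complex.I)‖ ^ 2 =
      ((Ny : ℝ) * (2 * Nzt))) ↔
      (∀ ξ₁ ξ₂ : ℤ,
        acf2 Ny Nzt UH ξ₁ ξ₂ + acf2 Ny Nzt UV ξ₁ ξ₂ =
          if ξ₁ = 0 ∧ ξ₂ = 0 then (2 * Ny * Nzt : ℂ) else 0) := by
  have habs : ∀ z : ℂ, ((‖z‖ ^ 2 : ℝ) : ℂ) = z * (starRingEnd ℂ) z := by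
    intro z
    rw [Complex.sq_norm]
    exact (Complex.mul_conj z).symm
  have hSV : ∀ ψy ψz : ℝ,
      (∑ n₁ ∈ Finset.range Ny, ∑ n₂ ∈ Finset.range Nzt,
        UV n₁ n₂ * Complex.exp (-((n₁ : ℂ) * (ψy : ℂ) + 2 * (n₂ : ℂ) * (ψz : ℂ)) * Complex.I))
      = ∑ n₁ ∈ Finset.Icc (0:ℤ) ((Ny:ℤ)-1), ∑ n₂ ∈ Finset.Icc (0:ℤ) ((Nzt:ℤ)-1),
        UV n₁ n₂ * Complex.exp (-((n₁:ℂ)*(ψy:ℂ) + 2*(n₂:ℂ)*(ψz:ℂ)) * Complex.I) := by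
    intro ψy ψz
    rw [← sum_range_int2 Ny Nzt
      (fun a b => UV a b * Complex.exp (-((a:ℂ)*(ψy:ℂ) + 2*(b:ℂ)*(ψz:ℂ)) * Complex.I))]
    refine Finset.sum_congr rfl fun n₁ _ => Finset.sum_congr rfl fun n₂ _ => ?_
    norm_cast
  have hSH : ∀ ψy ψz : ℝ,
      (∑ n₁ ∈ Finset.range Ny, ∑ n₂ ∈ Finset.range Nzt,
        UH n₁ n₂ * Complex.exp (-((n₁ : ℂ) * (ψy : ℂ) + (2 * (n₂ : ℂ) + 1) * (ψz : ℂ)) * Complex.I))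
      = (∑ n₁ ∈ Finset.Icc (0:ℤ) ((Ny:ℤ)-1), ∑ n₂ ∈ Finset.Icc (0:ℤ) ((Nzt:ℤ)-1),
        UH n₁ n₂ * Complex.exp (-((n₁:ℂ)*(ψy:ℂ) + 2*(n₂:ℂ)*(ψz:ℂ)) * Complex.I))
        * Complex.exp (-(ψz:ℂ) * Complex.I) := by
    intro ψy ψz
    rw [← sum_range_int2 Ny Nzt
      (fun a b => UH a b * Complex.exp (-((a:ℂ)*(ψy:ℂ) + 2*(b:ℂ)*(ψz:ℂ)) * Complex.I)),
      Finset.sum_mul]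
    refine Finset.sum_congr rfl fun n₁ _ => ?_
    rw [Finset.sum_mul]
    refine Finset.sum_congr rfl fun n₂ _ => ?_
    rw [mul_assoc, ← Complex.exp_add]
    congr 2
    push_cast
    ring
  have hw : ∀ ψz : ℝ, Complex.exp (-(ψz:ℂ) * Complex.I) *
      (starRingEnd ℂ) (Complex.exp (-(ψz:ℂ) * Complex.I)) = 1 := by
    intro ψz
    rw [← Complex.exp_conj, ← Complex.exp_add]
    have harg : (-(ψz:ℂ) * Complex.I) + (starRingEnd ℂ) (-(ψz:ℂ) * Complex.I) = 0 := by
      simp only [map_neg, map_mul, Complex.conj_ofReal, Complex.conj_I]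
      ring
    rw [harg, Complex.exp_zero]
  have hAF : ∀ ψy ψz : ℝ,
      ((‖∑ n₁ ∈ Finset.range Ny, ∑ n₂ ∈ Finset.range Nzt,
          UH n₁ n₂ *
            Complex.exp (-((n₁ : ℂ) * (ψy : ℂ) + (2 * (n₂ : ℂ) + 1) * (ψz : ℂ)) *
              Complex.I)‖ ^ 2 +
        ‖∑ n₁ ∈ Finset.range Ny, ∑ n₂ ∈ Finset.range Nzt,
          UV n₁ n₂ *
            Complex.exp (-((n₁ : ℂ) * (ψy : ℂ) + 2 * (n₂ : ℂ) * (ψz : ℂ)) *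
              Complex.I)‖ ^ 2 : ℝ) : ℂ)
      = ∑ ξ₁ ∈ Finset.Icc (1-(Ny:ℤ)) ((Ny:ℤ)-1), ∑ ξ₂ ∈ Finset.Icc (1-(Nzt:ℤ)) ((Nzt:ℤ)-1),
        (acf2 Ny Nzt UH ξ₁ ξ₂ + acf2 Ny Nzt UV ξ₁ ξ₂) *
          Complex.exp (((ξ₁:ℂ)*(ψy:ℂ) + 2*(ξ₂:ℂ)*(ψz:ℂ)) * Complex.I) := by
    intro ψy ψz
    rw [Complex.ofReal_add, habs, habs, hSH ψy ψz, hSV ψy ψz, map_mul, mul_mul_mul_comm,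
      hw ψz, mul_one, expand Ny Nzt UH hsUH ψy ψz, expand Ny Nzt UV hsUV ψy ψz,
      ← Finset.sum_add_distrib]
    refine Finset.sum_congr rfl fun ξ₁ _ => ?_
    rw [← Finset.sum_add_distrib]
    exact Finset.sum_congr rfl fun ξ₂ _ => (add_mul _ _ _).symm
  constructor
  · intro h ξ₁ ξ₂
    have hflat : ∀ ψy ψz : ℝ,
        ∑ a ∈ Finset.Icc (1-(Ny:ℤ)) ((Ny:ℤ)-1), ∑ b ∈ Finset.Icc (1-(Nzt:ℤ)) ((Nzt:ℤ)-1),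
          (acf2 Ny Nzt UH a b + acf2 Ny Nzt UV a b) *
            Complex.exp (((a:ℂ)*(ψy:ℂ) + 2*(b:ℂ)*(ψz:ℂ)) * Complex.I)
          = (Ny:ℂ) * (2*Nzt) := by
      intro ψy ψz
      rw [← hAF ψy ψz, h ψy ψz]
      push_cast
      ring
    by_cases hmem : ξ₁ ∈ Finset.Icc (1-(Ny:ℤ)) ((Ny:ℤ)-1) ∧
        ξ₂ ∈ Finset.Icc (1-(Nzt:ℤ)) ((Nzt:ℤ)-1)
    · exact fourier_extract Ny Nzt
        (fun a b => acf2 Ny Nzt UH a b + acf2 Ny Nzt UV a b) hflat ξ₁ ξ₂ hmem.1 hmem.2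
    · have hout : ξ₁ ∉ Finset.Icc (1-(Ny:ℤ)) ((Ny:ℤ)-1) ∨
          ξ₂ ∉ Finset.Icc (1-(Nzt:ℤ)) ((Nzt:ℤ)-1) := by tauto
      rw [acf_out Ny Nzt UH hsUH ξ₁ ξ₂ hout, acf_out Ny Nzt UV hsUV ξ₁ ξ₂ hout, add_zero]
      by_cases h00 : ξ₁ = 0 ∧ ξ₂ = 0
      · rw [if_pos h00]
        obtain ⟨e1, e2⟩ := h00
        subst e1; subst e2
        simp only [Finset.mem_Icc, not_and_or, not_le] at hout
        have : Ny = 0 ∨ Nzt = 0 := by omega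
        rcases this with hN | hN <;> simp [hN]
      · rw [if_neg h00]
  · intro hg ψy ψz
    have key : ((‖∑ n₁ ∈ Finset.range Ny, ∑ n₂ ∈ Finset.range Nzt,
          UH n₁ n₂ *
            Complex.exp (-((n₁ : ℂ) * (ψy : ℂ) + (2 * (n₂ : ℂ) + 1) * (ψz : ℂ)) *
              Complex.I)‖ ^ 2 +
        ‖∑ n₁ ∈ Finset.range Ny, ∑ n₂ ∈ Finset.range Nzt,
          UV n₁ n₂ *
            Complex.exp (-((n₁ : ℂ) * (ψy : ℂ) + 2 * (n₂ : ℂ) * (ψz : ℂ)) *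
              Complex.I)‖ ^ 2 : ℝ) : ℂ) = (((Ny : ℝ) * (2 * Nzt) : ℝ) : ℂ) := by
      rw [hAF ψy ψz]
      have hterm : ∀ a b : ℤ,
          (acf2 Ny Nzt UH a b + acf2 Ny Nzt UV a b) *
            Complex.exp (((a:ℂ)*(ψy:ℂ) + 2*(b:ℂ)*(ψz:ℂ)) * Complex.I)
          = if a = 0 then (if b = 0 then (2 * Ny * Nzt : ℂ) else 0) else 0 := by
        intro a b
        rw [hg a b]
        by_cases h00 : a = 0 ∧ b = 0
        · obtain ⟨e1, e2⟩ := h00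
          subst e1; subst e2
          norm_num
        · rw [if_neg h00, zero_mul]
          by_cases ha : a = 0
          · have hb : ¬ b = 0 := by tauto
            rw [if_pos ha, if_neg hb]
          · rw [if_neg ha]
      simp only [hterm]
      by_cases hN : Ny = 0 ∨ Nzt = 0
      · rcases hN with hN | hN <;> subst hN <;>
          simp [Finset.Icc_eq_empty_iff] <;> push_cast <;> ring
      · push_neg at hN
        have hNy : 1 ≤ Ny := by omega
        have hNzt : 1 ≤ Nzt := by omega
        have h1 : ∀ x : ℤ, (∑ b ∈ Finset.Icc (1-(Nzt:ℤ)) ((Nzt:ℤ)-1),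
            if x = 0 then (if b = 0 then (2 * Ny * Nzt : ℂ) else 0) else 0)
            = if x = 0 then (2 * Ny * Nzt : ℂ) else 0 := by
          intro x
          by_cases hx : x = 0
          · simp only [hx, if_true]
            rw [Finset.sum_ite_eq' _ 0, if_pos (Finset.mem_Icc.mpr (by constructor <;> omega))]
          · simp [hx]
        simp only [h1]
        rw [Finset.sum_ite_eq' _ 0, if_pos (Finset.mem_Icc.mpr (by constructor <;> omega))]
        push_cast
        ring
    exact Complex.ofReal_inj.mp key
end
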